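/- Let ρ, η > 0 be sufficiently small and r = 2, and define a'_m = min{4ρ(1+η), 2/(π|m|), (2/(π|m|))·(2/(π|m|ρη))²} for m ≠ 0 and a'_0 = 4ρ(1+η). Then Σ_{m∈ℤ} a'_m ≤ C·log((ρη)^{-1}) for an absolute constant C. -/

import Mathlib

lemma aux_min_le (ρ η x a : ℝ) (hρ : 0 < ρ) (hη : 0 < η) (hx : 1 ≤ x) :
    min (min a (2 / (Real.pi * x))) (2 / (Real.pi * x) * (2 / (Real.pi * x * ρ * η)) ^ 2)
      ≤ 4 / Real.pi ^ 2 * (ρ * η)⁻¹ * (x ^ 2)⁻¹ := by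
  have hπ := Real.pi_pos
  have hx0 : 0 < x := lt_of_lt_of_le one_pos hx
  set b := 2 / (Real.pi * x) with hbdef
  set X := 2 / (Real.pi * x * ρ * η) with hXdef
  have hb0 : 0 < b := by positivity
  have hX0 : 0 < X := by positivity
  have hrhs : 4 / Real.pi ^ 2 * (ρ * η)⁻¹ * (x ^ 2)⁻¹ = b * X := by
    rw [hbdef, hXdef]
    field_simp
    ring
  rw [hrhs]
  rcases le_total X 1 with h | h
  · calc min (min a b) (b * X ^ 2) ≤ b * X ^ 2 := min_le_right _ _
      _ ≤ b * X := by
        have hXX : X ^ 2 ≤ X := by nlinarith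
        exact mul_le_mul_of_nonneg_left hXX hb0.le
  · calc min (min a b) (b * X ^ 2) ≤ b := (min_le_left _ _).trans (min_le_right _ _)
      _ ≤ b * X := le_mul_of_one_le_right hb0.le h

set_option maxHeartbeats 1000000 in
theorem stmt7 : ∃ C ε₀ : ℝ, 0 < C ∧ 0 < ε₀ ∧ ∀ ρ η : ℝ, 0 < ρ → ρ < ε₀ → 0 < η → η < ε₀ →
    (∑' m : ℤ, (if m = 0 then 4 * ρ * (1 + η) else
      min (min (4 * ρ * (1 + η)) (2 / (Real.pi * |(m : ℝ)|)))
        (2 / (Real.pi * |(m : ℝ)|) * (2 / (Real.pi * |(m : ℝ)| * ρ * η)) ^ 2)))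
      ≤ C * Real.log (ρ * η)⁻¹ := by
  refine ⟨10, 1/2, by norm_num, by norm_num, ?_⟩
  intro ρ η hρ hρ' hη hη'
  have hπ := Real.pi_pos
  have hπ3 := Real.pi_gt_three
  set t := ρ * η with ht
  have ht0 : 0 < t := mul_pos hρ hη
  have ht4 : t < 1/4 := by nlinarith
  have ht4' : (4:ℝ) ≤ t⁻¹ := by
    rw [show (4:ℝ) = (1/4 : ℝ)⁻¹ by norm_num]
    exact inv_anti₀ ht0 ht4.le
  set f : ℤ → ℝ := fun m => if m = 0 then 4 * ρ * (1 + η) else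
      min (min (4 * ρ * (1 + η)) (2 / (Real.pi * |(m : ℝ)|)))
        (2 / (Real.pi * |(m : ℝ)|) * (2 / (Real.pi * |(m : ℝ)| * ρ * η)) ^ 2) with hf
  -- basic facts about f
  have habs : ∀ m : ℤ, m ≠ 0 → (1:ℝ) ≤ |(m : ℝ)| := by
    intro m hm
    have : (1:ℤ) ≤ |m| := Int.one_le_abs (by omega)
    calc (1:ℝ) ≤ ((|m| : ℤ) : ℝ) := by exact_mod_cast this
      _ = |(m:ℝ)| := by push_cast; ring
  have hf0 : ∀ m : ℤ, 0 ≤ f m := by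
    intro m
    rw [hf]
    dsimp only
    split
    · positivity
    · rename_i hm
      have h1 := habs m hm
      have hx0 : (0:ℝ) < |(m:ℝ)| := lt_of_lt_of_le one_pos h1
      have hb : (0:ℝ) ≤ 2 / (Real.pi * |(m:ℝ)|) := by positivity
      refine le_min (le_min (by positivity) hb) (by positivity)
  have hfb : ∀ m : ℤ, m ≠ 0 → f m ≤ 2 / (Real.pi * |(m : ℝ)|) := by
    intro m hm
    rw [hf]
    dsimp only
    rw [if_neg hm]
    exact (min_le_left _ _).trans (min_le_right _ _)
  have hfc : ∀ m : ℤ, m ≠ 0 → f m ≤ 4 / Real.pi ^ 2 * t⁻¹ * (|(m:ℝ)| ^ 2)⁻¹ := by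
    intro m hm
    rw [hf]
    dsimp only
    rw [if_neg hm]
    exact aux_min_le ρ η _ _ hρ hη (habs m hm)
  have hfeven : ∀ m : ℤ, f (-m) = f m := by
    intro m
    rw [hf]
    simp [neg_eq_zero]
  set N : ℕ := ⌈t⁻¹⌉₊ with hNdef
  have hN1 : t⁻¹ ≤ (N : ℝ) := Nat.le_ceil _
  have hNpos : 0 < N := Nat.ceil_pos.mpr (by positivity)
  have hN2 : (N : ℝ) ≤ 2 * t⁻¹ := by
    have h1 : (N : ℝ) < t⁻¹ + 1 := Nat.ceil_lt_add_one (by positivity)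
    linarith
  set K : ℝ := 4 / Real.pi ^ 2 * t⁻¹ with hKdef
  have hK0 : 0 < K := by positivity
  set g : ℕ → ℝ := fun n => f ((n : ℤ) + 1) with hg
  have hgabs : ∀ n : ℕ, |(((n : ℤ) + 1 : ℤ) : ℝ)| = (n : ℝ) + 1 := by
    intro n
    rw [abs_of_pos (by push_cast; positivity)]
    push_cast; ring
  have hgne : ∀ n : ℕ, ((n : ℤ) + 1) ≠ 0 := by intro n; omega
  have hg0 : ∀ n : ℕ, 0 ≤ g n := fun n => hf0 _
  have hgK : ∀ n : ℕ, g n ≤ K * (((n : ℝ) + 1) ^ 2)⁻¹ := by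
    intro n
    have := hfc _ (hgne n)
    rw [hgabs n] at this
    exact this
  -- summability of the majorant
  have hsum2 : Summable (fun n : ℕ => ((n : ℝ) ^ 2)⁻¹) := by
    have := (Real.summable_one_div_nat_pow (p := 2)).mpr one_lt_two
    simpa [one_div] using this
  have hsumM : Summable (fun n : ℕ => K * (((n : ℝ) + 1) ^ 2)⁻¹) := by
    refine Summable.mul_left K ?_
    have := (summable_nat_add_iff (f := fun n : ℕ => ((n : ℝ) ^ 2)⁻¹) 1).mpr hsum2
    refine this.congr fun n => ?_
    push_cast
    ring_nf
  have hgsum : Summable g := Summable.of_nonneg_of_le hg0 hgK hsumM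
  -- summability of f over ℤ
  have hfnat : Summable (fun n : ℕ => f n) := by
    refine (summable_nat_add_iff 1).mp ?_
    refine hgsum.congr fun n => ?_
    rw [hg]
    push_cast
    ring_nf
  have hfneg : (fun n : ℕ => f (-((n : ℤ) + 1))) = g := by
    funext n
    rw [hfeven, hg]
  have hfsum : Summable f := Summable.of_nat_of_neg_add_one hfnat (hfneg ▸ hgsum)
  -- decomposition of the sum
  have hsplit : ∑' m : ℤ, f m = f 0 + ((∑' n : ℕ, g n) + ∑' n : ℕ, g n) := by
    rw [tsum_of_nat_of_neg_add_one hfnat (hfneg ▸ hgsum)]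
    have h1 : ∑' n : ℕ, f n = f 0 + ∑' n : ℕ, g n := by
      rw [Summable.tsum_eq_zero_add hfnat]
      simp only [Nat.cast_zero]
      congr 1
      all_goals
        refine tsum_congr fun n => ?_
        rw [hg]
        push_cast
        ring_nf
    have h2 : ∑' n : ℕ, f (-((n : ℤ) + 1)) = ∑' n : ℕ, g n := by rw [hfneg]
    rw [h1, h2]
    ring
  -- bound on the head
  have hA : ∑ i ∈ Finset.range N, g i ≤ 1 + Real.log N := by
    have hharm : (harmonic N : ℝ) = ∑ i ∈ Finset.range N, ((i : ℝ) + 1)⁻¹ := by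
      rw [harmonic]
      push_cast
      ring
    calc ∑ i ∈ Finset.range N, g i
        ≤ ∑ i ∈ Finset.range N, 2 / Real.pi * ((i : ℝ) + 1)⁻¹ := by
          refine Finset.sum_le_sum fun i _ => ?_
          have h := hfb _ (hgne i)
          rw [hgabs i] at h
          calc g i ≤ 2 / (Real.pi * ((i : ℝ) + 1)) := h
            _ = 2 / Real.pi * ((i : ℝ) + 1)⁻¹ := by
              rw [div_mul_eq_div_div, div_eq_mul_inv]
      _ = 2 / Real.pi * (harmonic N : ℝ) := by rw [← Finset.mul_sum, hharm]
      _ ≤ 1 * (1 + Real.log N) := by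
          have h1 : (harmonic N : ℝ) ≤ 1 + Real.log N := harmonic_le_one_add_log N
          have h2 : (0 : ℝ) ≤ (harmonic N : ℝ) := by
            rw [hharm]; exact Finset.sum_nonneg fun i _ => by positivity
          have h3 : 2 / Real.pi ≤ 1 := by
            rw [div_le_one hπ]; linarith
          exact mul_le_mul h3 h1 h2 (by norm_num)
      _ = 1 + Real.log N := one_mul _
  -- bound on the tail
  have hshift : Summable (fun i : ℕ => g (i + N)) := (summable_nat_add_iff N).mpr hgsum
  have hMaj : ∀ i : ℕ, g (i + N) ≤ K * (((i : ℝ) + N + 1) ^ 2)⁻¹ := by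
    intro i
    refine (hgK (i + N)).trans_eq ?_
    push_cast
    ring
  have hMsum : Summable (fun i : ℕ => K * (((i : ℝ) + N + 1) ^ 2)⁻¹) := by
    refine Summable.mul_left K ?_
    have := (summable_nat_add_iff (f := fun n : ℕ => ((n : ℝ) ^ 2)⁻¹) (N + 1)).mpr hsum2
    refine this.congr fun n => ?_
    push_cast
    ring_nf
  have htail : ∑' i : ℕ, (((i : ℝ) + N + 1) ^ 2)⁻¹ ≤ ((N : ℝ))⁻¹ := by
    have hN0' : (0 : ℝ) < (N : ℝ) := by exact_mod_cast hNpos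
    refine Real.tsum_le_of_sum_range_le (fun n => by positivity) fun n => ?_
    have key : ∀ i : ℕ, (((i : ℝ) + N + 1) ^ 2)⁻¹ ≤ ((i : ℝ) + N)⁻¹ - (((i : ℝ) + 1) + N)⁻¹ := by
      intro i
      set y : ℝ := (i : ℝ) + N with hy
      have hy1 : (1 : ℝ) ≤ y := by
        rw [hy]
        have h1 : (1:ℝ) ≤ (N:ℝ) := by exact_mod_cast hNpos
        have h2 : (0:ℝ) ≤ (i:ℝ) := by positivity
        linarith
      have h1 : y⁻¹ - (y + 1)⁻¹ = (y * (y + 1))⁻¹ := by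
        field_simp
        ring
      have h2 : ((i : ℝ) + 1) + N = y + 1 := by rw [hy]; ring
      have h3 : (i : ℝ) + N + 1 = y + 1 := by rw [hy]
      rw [h2, h3, h1]
      refine inv_anti₀ (by positivity) (by nlinarith)
    calc ∑ i ∈ Finset.range n, (((i : ℝ) + N + 1) ^ 2)⁻¹
        ≤ ∑ i ∈ Finset.range n, (((i : ℝ) + N)⁻¹ - (((i : ℝ) + 1) + N)⁻¹) :=
          Finset.sum_le_sum fun i _ => key i
      _ = ((0 : ℝ) + N)⁻¹ - ((n : ℝ) + N)⁻¹ := by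
          have h := Finset.sum_range_sub' (f := fun i : ℕ => ((i : ℝ) + N)⁻¹) n
          push_cast at h ⊢
          exact h
      _ ≤ ((N : ℝ))⁻¹ := by
          have h : (0 : ℝ) ≤ ((n : ℝ) + N)⁻¹ := by positivity
          rw [zero_add]
          linarith
  have hB : ∑' i : ℕ, g (i + N) ≤ 1 := by
    have hN0' : (0 : ℝ) < (N : ℝ) := by exact_mod_cast hNpos
    calc ∑' i : ℕ, g (i + N) ≤ ∑' i : ℕ, K * (((i : ℝ) + N + 1) ^ 2)⁻¹ :=
          Summable.tsum_le_tsum hMaj hshift hMsum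
      _ = K * ∑' i : ℕ, (((i : ℝ) + N + 1) ^ 2)⁻¹ := tsum_mul_left
      _ ≤ K * ((N : ℝ))⁻¹ := mul_le_mul_of_nonneg_left htail hK0.le
      _ ≤ 1 := by
          have h1 : t⁻¹ * ((N : ℝ))⁻¹ ≤ 1 := by
            rw [← div_eq_mul_inv, div_le_one hN0']
            exact hN1
          have h2 : 4 / Real.pi ^ 2 ≤ 1 := by
            rw [div_le_one (by positivity)]
            nlinarith
          calc K * ((N : ℝ))⁻¹ = 4 / Real.pi ^ 2 * (t⁻¹ * ((N : ℝ))⁻¹) := by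
                rw [hKdef]; ring
            _ ≤ 1 * 1 := mul_le_mul h2 h1 (by positivity) (by norm_num)
            _ = 1 := by norm_num
  -- put it together
  have hS : ∑' n : ℕ, g n ≤ (1 + Real.log N) + 1 := by
    rw [← Summable.sum_add_tsum_nat_add N hgsum]
    exact add_le_add hA hB
  have hf0val : f 0 = 4 * ρ * (1 + η) := by rw [hf]; norm_num
  have hf03 : f 0 ≤ 3 := by rw [hf0val]; nlinarith
  have hlogN : Real.log N ≤ Real.log 2 + Real.log t⁻¹ := by
    have h := Real.log_le_log (by exact_mod_cast hNpos) hN2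
    rwa [Real.log_mul two_ne_zero (by positivity)] at h
  have hL : Real.log 4 ≤ Real.log t⁻¹ := Real.log_le_log (by norm_num) ht4'
  have hlog4 : Real.log 4 = 2 * Real.log 2 := by
    rw [show (4 : ℝ) = 2 ^ 2 by norm_num, Real.log_pow]
    push_cast
    ring
  have hlog2 := Real.log_two_gt_d9
  rw [hsplit]
  linarith [hS]
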